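/- arXiv:math/0604074 — 2 statements merged into one kernel-verified Lean document; each statement's English description precedes it below -/
import Mathlib

section
/- Let α > −1 and let L_n^{(α)} denote the Laguerre polynomial of degree n normalized with leading coefficient (−1)ⁿ/n!, i.e. L_n^{(α)}(x) = Σ_{k=0}^{n} (−1)^k C(n+α, n−k) x^k / k!. Then for every fixed x ∈ ℝ with x ≥ 0, lim_{n→∞} n^{−α} L_n^{(α)}(x/n) = Σ_{j=0}^{∞} (−1)^j x^j/(j! Γ(j+α+1)). -/
open Filter Finset

lemma mh_gamma_shift (s : ℝ) (hs : 0 < s) (n : ℕ) :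
    Real.Gamma (s + n) = Real.Gamma s * ∏ j ∈ Finset.range n, (s + j) := by
  induction n with
  | zero => simp
  | succ n ih =>
      have h : s + (n : ℝ) ≠ 0 := by positivity
      have h2 : s + ((n : ℕ) + 1 : ℕ) = (s + n) + 1 := by push_cast; ring
      rw [h2, Real.Gamma_add_one h, ih, Finset.prod_range_succ]
      ring

lemma mh_r_tendsto (α : ℝ) (hα : -1 < α) :
    Tendsto (fun n : ℕ => Real.Gamma ((n : ℝ) + α + 1) / ((Nat.factorial n : ℝ) * (n : ℝ) ^ α))
      atTop (nhds 1) := by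
  set s : ℝ := α + 1 with hs_def
  have hs : 0 < s := by simp [hs_def]; linarith
  have hG : Real.Gamma s ≠ 0 := (Real.Gamma_pos_of_pos hs).ne'
  have key : Tendsto (fun n => Real.Gamma s / Real.GammaSeq s n) atTop (nhds 1) := by
    have h := (tendsto_const_nhds (x := Real.Gamma s)).div (Real.GammaSeq_tendsto_Gamma s) hG
    rw [div_self hG] at h
    exact h
  have h2 : Tendsto (fun n : ℕ => (n : ℝ) / (s + n)) atTop (nhds 1) := by
    have hd : Tendsto (fun n : ℕ => s + (n : ℝ)) atTop atTop :=
      tendsto_atTop_add_const_left _ _ tendsto_natCast_atTop_atTop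
    have h0 : Tendsto (fun n : ℕ => s / (s + (n : ℝ))) atTop (nhds 0) :=
      tendsto_const_nhds.div_atTop hd
    have h1 : Tendsto (fun n : ℕ => 1 - s / (s + (n : ℝ))) atTop (nhds 1) := by
      simpa using tendsto_const_nhds.sub h0
    refine h1.congr' ?_
    filter_upwards [eventually_ge_atTop 1] with n hn
    have hne : s + (n : ℝ) ≠ 0 := by
      have : (1:ℝ) ≤ (n:ℝ) := by exact_mod_cast hn
      positivity
    field_simp
    ring
  have hmul := h2.mul key
  rw [mul_one] at hmul
  refine hmul.congr' ?_
  filter_upwards [eventually_ge_atTop 1] with n hn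
  have hn0 : (0 : ℝ) < n := by exact_mod_cast hn
  have hP : (0 : ℝ) < ∏ j ∈ Finset.range n, (s + j) := by
    apply Finset.prod_pos; intro j _; positivity
  have hns : (n : ℝ) ^ s = n * (n : ℝ) ^ α := by
    rw [hs_def, Real.rpow_add hn0, Real.rpow_one]; ring
  have hGam : Real.Gamma ((n : ℝ) + α + 1) = Real.Gamma s * ∏ j ∈ Finset.range n, (s + j) := by
    rw [show (n : ℝ) + α + 1 = s + n by rw [hs_def]; ring]
    exact mh_gamma_shift s hs n
  have hGS : Real.GammaSeq s n =
      (n : ℝ) ^ s * (Nat.factorial n : ℝ) / ((∏ j ∈ Finset.range n, (s + j)) * (s + n)) := by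
    rw [Real.GammaSeq, Finset.prod_range_succ]
  rw [hGam, hGS, hns]
  have hsn : (0:ℝ) < s + n := by positivity
  have hfac : (0:ℝ) < (Nat.factorial n : ℝ) := by exact_mod_cast Nat.factorial_pos n
  have hna : (0:ℝ) < (n:ℝ) ^ α := Real.rpow_pos_of_pos hn0 α
  field_simp

theorem stmt_18 (α : ℝ) (hα : -1 < α) :
    let L : ℕ → ℝ → ℝ := fun n x =>
      ∑ k ∈ Finset.range (n + 1),
        (-1 : ℝ) ^ k * (Real.Gamma ((n : ℝ) + α + 1) /
          (Real.Gamma ((k : ℝ) + α + 1) * (Nat.factorial (n - k)))) * x ^ k / (Nat.factorial k)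
    ∀ x : ℝ, 0 ≤ x →
      Tendsto (fun n : ℕ => (n : ℝ) ^ (-α) * L n (x / (n : ℝ))) atTop
        (nhds (∑' j : ℕ, (-1 : ℝ) ^ j * x ^ j /
          ((Nat.factorial j) * Real.Gamma ((j : ℝ) + α + 1)))) := by
  intro L x hx
  -- basic positivity facts
  have hΓ : ∀ k : ℕ, 0 < Real.Gamma ((k : ℝ) + α + 1) := by
    intro k
    apply Real.Gamma_pos_of_pos
    have : (0:ℝ) ≤ (k:ℝ) := Nat.cast_nonneg k
    linarith
  set g : ℕ → ℝ := fun k => (-1 : ℝ) ^ k * x ^ k /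
      ((Nat.factorial k) * Real.Gamma ((k : ℝ) + α + 1)) with hg_def
  set r : ℕ → ℝ := fun n => Real.Gamma ((n : ℝ) + α + 1) /
      ((Nat.factorial n : ℝ) * (n : ℝ) ^ α) with hr_def
  set p : ℕ → ℕ → ℝ := fun n k => ∏ i ∈ Finset.range k, (((n : ℝ) - i) / n) with hp_def
  set f : ℕ → ℕ → ℝ := fun n k => if k ≤ n then g k * (r n * p n k) else 0 with hf_def
  have hr_tendsto := mh_r_tendsto α hα
  have hr_nonneg : ∀ n, 0 ≤ r n := by
    intro n
    apply div_nonneg (le_of_lt (hΓ n))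
    positivity
  have hp_nonneg : ∀ n k, k ≤ n → 0 ≤ p n k := by
    intro n k hk
    apply Finset.prod_nonneg
    intro i hi
    rcases Nat.eq_zero_or_pos n with h0 | h0
    · simp only [Finset.mem_range] at hi; omega
    · apply div_nonneg _ (Nat.cast_nonneg n)
      have : (i:ℝ) ≤ (n:ℝ) := by
        have : i ≤ n := by simp only [Finset.mem_range] at hi; omega
        exact_mod_cast this
      linarith
  have hp_le_one : ∀ n k, k ≤ n → p n k ≤ 1 := by
    intro n k hk
    apply Finset.prod_le_one
    · intro i hi
      rcases Nat.eq_zero_or_pos n with h0 | h0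
      · simp only [Finset.mem_range] at hi; omega
      · apply div_nonneg _ (Nat.cast_nonneg n)
        have : (i:ℝ) ≤ (n:ℝ) := by
          have : i ≤ n := by simp only [Finset.mem_range] at hi; omega
          exact_mod_cast this
        linarith
    · intro i hi
      rcases Nat.eq_zero_or_pos n with h0 | h0
      · simp only [Finset.mem_range] at hi; omega
      · have hn0 : (0:ℝ) < (n:ℝ) := by exact_mod_cast h0
        rw [div_le_one hn0]
        have : (0:ℝ) ≤ (i:ℝ) := Nat.cast_nonneg i
        linarith
  -- pointwise limit
  have h_lim : ∀ k, Tendsto (fun n => f n k) atTop (nhds (g k)) := by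
    intro k
    have hp : Tendsto (fun n => p n k) atTop (nhds 1) := by
      have h1 : Tendsto (fun n : ℕ => ∏ i ∈ Finset.range k, (1 - (i:ℝ)/n)) atTop
          (nhds (∏ i ∈ Finset.range k, (1:ℝ))) := by
        apply tendsto_finset_prod
        intro i _
        simpa using tendsto_const_nhds.sub (tendsto_const_div_atTop_nhds_zero_nat (i:ℝ))
      rw [Finset.prod_const_one] at h1
      refine h1.congr' ?_
      filter_upwards [eventually_ge_atTop 1] with n hn
      apply Finset.prod_congr rfl
      intro i _
      have hn0 : ((n:ℝ)) ≠ 0 := by positivity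
      field_simp
    have hmain : Tendsto (fun n => g k * (r n * p n k)) atTop (nhds (g k)) := by
      have := tendsto_const_nhds (x := g k) |>.mul (hr_tendsto.mul hp)
      simpa using this
    refine hmain.congr' ?_
    filter_upwards [eventually_ge_atTop k] with n hn
    simp [hf_def, hn]
  -- bound
  set bound : ℕ → ℝ := fun k => 2 * (x ^ k /
      ((Nat.factorial k : ℝ) * Real.Gamma ((k : ℝ) + α + 1))) with hbound_def
  have hbound_nonneg : ∀ k, 0 ≤ bound k := by
    intro k
    have := hΓ k
    have hf0 : (0:ℝ) < (Nat.factorial k : ℝ) := by exact_mod_cast Nat.factorial_pos k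
    have : 0 ≤ x ^ k := pow_nonneg hx k
    positivity
  have h_bound : ∀ᶠ n in atTop, ∀ k, ‖f n k‖ ≤ bound k := by
    filter_upwards [hr_tendsto.eventually_lt_const (by norm_num : (1:ℝ) < 2)] with n hrn
    intro k
    by_cases hk : k ≤ n
    · have hgk : |g k| = x ^ k / ((Nat.factorial k : ℝ) * Real.Gamma ((k : ℝ) + α + 1)) := by
        rw [hg_def]
        rw [abs_div, abs_mul, abs_pow, abs_neg, abs_one, one_pow, one_mul,
          abs_of_nonneg (pow_nonneg hx k), abs_mul,
          Nat.abs_cast, abs_of_nonneg (le_of_lt (hΓ k))]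
      have h1 : ‖f n k‖ = |g k| * (r n * p n k) := by
        rw [hf_def]
        simp only [hk, if_true, Real.norm_eq_abs]
        rw [abs_mul, abs_of_nonneg (mul_nonneg (hr_nonneg n) (hp_nonneg n k hk))]
      rw [h1, hgk, hbound_def]
      have h2 : r n * p n k ≤ 2 := by
        calc r n * p n k ≤ r n * 1 := by
              apply mul_le_mul_of_nonneg_left (hp_le_one n k hk) (hr_nonneg n)
          _ = r n := mul_one _
          _ ≤ 2 := le_of_lt hrn
      have h3 : 0 ≤ x ^ k / ((Nat.factorial k : ℝ) * Real.Gamma ((k : ℝ) + α + 1)) := by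
        have hf0 : (0:ℝ) < (Nat.factorial k : ℝ) := by exact_mod_cast Nat.factorial_pos k
        have := hΓ k
        have : 0 ≤ x ^ k := pow_nonneg hx k
        positivity
      calc x ^ k / ((Nat.factorial k : ℝ) * Real.Gamma ((k : ℝ) + α + 1)) * (r n * p n k)
          ≤ x ^ k / ((Nat.factorial k : ℝ) * Real.Gamma ((k : ℝ) + α + 1)) * 2 :=
            mul_le_mul_of_nonneg_left h2 h3
        _ = 2 * (x ^ k / ((Nat.factorial k : ℝ) * Real.Gamma ((k : ℝ) + α + 1))) := by ring
    · simp only [hf_def, hk, if_false, norm_zero]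
      exact hbound_nonneg k
  -- summability of the bound
  have h_sum : Summable bound := by
    rcases eq_or_lt_of_le hx with hx0 | hx0
    · apply summable_of_ne_finset_zero (s := {0})
      intro k hk
      simp only [Finset.mem_singleton] at hk
      rw [hbound_def, ← hx0]
      simp [zero_pow hk]
    · have hne : ∀ k, bound k ≠ 0 := by
        intro k
        have hf0 : (0:ℝ) < (Nat.factorial k : ℝ) := by exact_mod_cast Nat.factorial_pos k
        have h1 := hΓ k
        have h2 : 0 < x ^ k := pow_pos hx0 k
        rw [hbound_def]
        positivity
      apply summable_of_ratio_test_tendsto_lt_one (l := 0) (by norm_num)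
        (Eventually.of_forall hne)
      have heq : ∀ k : ℕ, ‖bound (k+1)‖ / ‖bound k‖ = x / (((k:ℝ)+1) * ((k:ℝ) + α + 1)) := by
        intro k
        have hbk : 0 < bound k := lt_of_le_of_ne (hbound_nonneg k) (Ne.symm (hne k))
        have hbk1 : 0 < bound (k+1) := lt_of_le_of_ne (hbound_nonneg (k+1)) (Ne.symm (hne (k+1)))
        have hf0 : ((Nat.factorial k : ℝ)) ≠ 0 := by
          exact_mod_cast (Nat.factorial_pos k).ne'
        have hG0 : Real.Gamma ((k:ℝ) + α + 1) ≠ 0 := (hΓ k).ne'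
        have hk1 : ((k:ℝ)+1) ≠ 0 := by positivity
        have hknn : (0:ℝ) ≤ (k:ℝ) := Nat.cast_nonneg k
        have hka : ((k:ℝ) + α + 1) ≠ 0 := by
          apply ne_of_gt; linarith
        have hG1 : Real.Gamma (((k:ℕ)+1 : ℕ) + α + 1) =
            ((k:ℝ) + α + 1) * Real.Gamma ((k:ℝ) + α + 1) := by
          have hcast : (((k:ℕ)+1 : ℕ) : ℝ) + α + 1 = ((k:ℝ) + α + 1) + 1 := by push_cast; ring
          rw [hcast, Real.Gamma_add_one hka]
        have hfs : ((Nat.factorial (k+1) : ℕ) : ℝ) = ((k:ℝ)+1) * (Nat.factorial k : ℝ) := by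
          rw [Nat.factorial_succ]; push_cast; ring
        have hb1 : bound (k+1) = (x / (((k:ℝ)+1) * ((k:ℝ) + α + 1))) * bound k := by
          rw [hbound_def]
          simp only
          rw [hG1, hfs, pow_succ]
          field_simp
        rw [Real.norm_eq_abs, Real.norm_eq_abs, abs_of_pos hbk, abs_of_pos hbk1, hb1,
          mul_div_assoc, div_self (hne k), mul_one]
      have hd : Tendsto (fun k : ℕ => ((k:ℝ)+1) * ((k:ℝ) + α + 1)) atTop atTop := by
        apply Tendsto.atTop_mul_atTop₀
        · exact tendsto_atTop_add_const_right _ _ tendsto_natCast_atTop_atTop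
        · have := tendsto_atTop_add_const_right atTop (α+1) tendsto_natCast_atTop_atTop
          refine this.congr fun k => by ring
      have hlim : Tendsto (fun k : ℕ => x / (((k:ℝ)+1) * ((k:ℝ) + α + 1))) atTop (nhds 0) :=
        tendsto_const_nhds.div_atTop hd
      exact Tendsto.congr (fun k => (heq k).symm) hlim
  have main := tendsto_tsum_of_dominated_convergence h_sum h_lim h_bound
  have htsum_g : (∑' k, g k) = ∑' j : ℕ, (-1 : ℝ) ^ j * x ^ j /
      ((Nat.factorial j) * Real.Gamma ((j : ℝ) + α + 1)) := rfl
  rw [← htsum_g]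
  refine main.congr' ?_
  filter_upwards [eventually_ge_atTop 1] with n hn
  have hn0 : (0:ℝ) < (n:ℝ) := by exact_mod_cast hn
  have htsum : (∑' k, f n k) = ∑ k ∈ Finset.range (n+1), f n k := by
    apply tsum_eq_sum
    intro k hk
    simp only [Finset.mem_range] at hk
    have : ¬ (k ≤ n) := by omega
    simp [hf_def, this]
  rw [htsum]
  show ∑ k ∈ Finset.range (n+1), f n k = (n : ℝ) ^ (-α) * L n (x / n)
  rw [show L n (x / n) = ∑ k ∈ Finset.range (n + 1),
        (-1 : ℝ) ^ k * (Real.Gamma ((n : ℝ) + α + 1) /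
          (Real.Gamma ((k : ℝ) + α + 1) * (Nat.factorial (n - k)))) * (x / n) ^ k /
          (Nat.factorial k) from rfl,
    Finset.mul_sum]
  apply Finset.sum_congr rfl
  intro k hk
  simp only [Finset.mem_range] at hk
  have hkn : k ≤ n := by omega
  -- term-by-term identity
  have hpval : p n k = (Nat.descFactorial n k : ℝ) / (n:ℝ) ^ k := by
    rw [hp_def]
    simp only
    rw [Nat.descFactorial_eq_prod_range, Nat.cast_prod,
      show ((n:ℝ))^k = ∏ _i ∈ Finset.range k, (n:ℝ) by simp, ← Finset.prod_div_distrib]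
    apply Finset.prod_congr rfl
    intro i hi
    simp only [Finset.mem_range] at hi
    rw [Nat.cast_sub (by omega : i ≤ n)]
  have hfacD : ((Nat.factorial n : ℕ) : ℝ) =
      ((Nat.factorial (n - k) : ℕ) : ℝ) * ((Nat.descFactorial n k : ℕ) : ℝ) := by
    exact_mod_cast (Nat.factorial_mul_descFactorial hkn).symm
  have hrpow : (n : ℝ) ^ (-α) = ((n:ℝ) ^ α)⁻¹ := by
    rw [Real.rpow_neg (le_of_lt hn0)]
  simp only [hf_def, hkn, if_true, hg_def, hr_def, hpval, hrpow]
  have hna : (0:ℝ) < (n:ℝ) ^ α := Real.rpow_pos_of_pos hn0 α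
  have hfk : ((Nat.factorial k : ℝ)) ≠ 0 := by exact_mod_cast (Nat.factorial_pos k).ne'
  have hfnk : ((Nat.factorial (n-k) : ℝ)) ≠ 0 := by exact_mod_cast (Nat.factorial_pos (n-k)).ne'
  have hfn : ((Nat.factorial n : ℝ)) ≠ 0 := by exact_mod_cast (Nat.factorial_pos n).ne'
  have hGk : Real.Gamma ((k:ℝ) + α + 1) ≠ 0 := (hΓ k).ne'
  have hnne : (n:ℝ) ≠ 0 := hn0.ne'
  rw [div_pow]
  field_simp
  rw [hfacD]
  ring
end

section
/- Let H_n denote the (physicists') Hermite polynomials, orthogonal with respect to e^{−x²} on ℝ and normalized with leading coefficient 2ⁿ. Then for every fixed x ∈ ℝ, lim_{n→∞} (−1)ⁿ √n · H_{2n}(x/(2√n)) / (2^{2n} n!) = cos(x)/√π. -/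
open Filter Finset Real Topology

namespace Stmt19

noncomputable def A (n : ℕ) : ℝ :=
  Real.sqrt n * (Nat.factorial (2 * n)) / (2 ^ (2 * n) * (Nat.factorial n : ℝ) ^ 2)

lemma wallis (n : ℕ) :
    ((Nat.factorial (2 * n) : ℝ)) ^ 2 * (2 * n + 1) ≤ 16 ^ n * (Nat.factorial n : ℝ) ^ 4 := by
  induction n with
  | zero => norm_num
  | succ n ih =>
    have h1 : 2 * (n + 1) = (2 * n + 1) + 1 := by ring
    rw [h1, Nat.factorial_succ, Nat.factorial_succ, Nat.factorial_succ]
    push_cast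
    have hp : (0:ℝ) < 16 ^ n := by positivity
    have hf : (0:ℝ) < (Nat.factorial n : ℝ) := by exact_mod_cast Nat.factorial_pos n
    have key := mul_le_mul_of_nonneg_right ih
      (show (0:ℝ) ≤ (2*n+1) * (2*n+2)^2 * (2*n+3) by positivity)
    have h2 : (2*(n:ℝ)+1) * (2*n+3) ≤ (2*n+2)^2 := by nlinarith [Nat.cast_nonneg (α := ℝ) n]
    have h3 : 16^n * (Nat.factorial n : ℝ)^4 * ((2*n+1) * (2*n+2)^2 * (2*n+3))
        ≤ 16^n * (Nat.factorial n : ℝ)^4 * ((2*n+2)^2 * (2*n+2)^2) := by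
      apply mul_le_mul_of_nonneg_left _ (by positivity)
      nlinarith [sq_nonneg ((2:ℝ)*n+2)]
    rw [show (16:ℝ)^(n+1) = 16^n*16 from pow_succ 16 n]
    nlinarith [key, h3]

lemma A_nonneg (n : ℕ) : 0 ≤ A n := by
  unfold A; positivity

lemma A_le_one (n : ℕ) : A n ≤ 1 := by
  have h := wallis n
  have hn : (Real.sqrt n) ^ 2 = n := Real.sq_sqrt (Nat.cast_nonneg n)
  have hsq : A n ^ 2 ≤ 1 := by
    unfold A
    rw [div_pow, mul_pow, mul_pow, hn]
    have h16 : ((2:ℝ) ^ (2*n)) ^ 2 = 16 ^ n := by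
      rw [← pow_mul, show 2*n*2 = 4*n by ring, pow_mul]; norm_num
    rw [h16, ← pow_mul, show 2*2 = 4 from rfl]
    have hf : (0:ℝ) < (Nat.factorial n : ℝ) := by exact_mod_cast Nat.factorial_pos n
    have hd : (0:ℝ) < 16 ^ n * (Nat.factorial n : ℝ) ^ 4 := by positivity
    rw [div_le_one hd]
    have hle : (n:ℝ) ≤ 2*n+1 := by linarith [Nat.cast_nonneg (α := ℝ) n]
    have := mul_le_mul_of_nonneg_right hle (sq_nonneg ((Nat.factorial (2*n) : ℝ)))
    linarith
  nlinarith [A_nonneg n]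

lemma A_eq_stirling {n : ℕ} (hn : 1 ≤ n) :
    A n = Stirling.stirlingSeq (2 * n) / (Stirling.stirlingSeq n) ^ 2 := by
  have hn0 : (0:ℝ) < n := by exact_mod_cast hn
  have hs : Real.sqrt n ^ 2 = n := Real.sq_sqrt hn0.le
  have hs0 : 0 < Real.sqrt n := Real.sqrt_pos.mpr hn0
  have ht : (0:ℝ) < ((n:ℝ) / Real.exp 1) ^ n := by positivity
  have hf : (0:ℝ) < (Nat.factorial n : ℝ) := by exact_mod_cast Nat.factorial_pos n
  unfold Stirling.stirlingSeq A
  have hsqrt4 : Real.sqrt (2 * ((2 * n : ℕ) : ℝ)) = 2 * Real.sqrt n := by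
    push_cast
    rw [show (2:ℝ) * (2 * (n:ℝ)) = 2 ^ 2 * n by ring, Real.sqrt_mul (by positivity),
      Real.sqrt_sq (by norm_num)]
  have hsqrt2 : Real.sqrt (2 * (n : ℝ)) = Real.sqrt 2 * Real.sqrt n := Real.sqrt_mul (by norm_num) _
  have h2 : Real.sqrt 2 ^ 2 = 2 := Real.sq_sqrt (by norm_num)
  have hpow : (((2 * n : ℕ):ℝ) / Real.exp 1) ^ (2 * n)
      = 2 ^ (2*n) * (((n:ℝ)/Real.exp 1) ^ n) ^ 2 := by
    push_cast
    rw [show ((2:ℝ) * (n:ℝ)) / Real.exp 1 = 2 * ((n:ℝ)/Real.exp 1) by ring]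
    ring
  rw [hsqrt4, hsqrt2, hpow]
  have h2s : (0:ℝ) < Real.sqrt 2 := Real.sqrt_pos.mpr (by norm_num)
  field_simp
  ring_nf
  rw [h2]

lemma tendsto_A : Tendsto A atTop (𝓝 (Real.sqrt π)⁻¹) := by
  have hπ : 0 < Real.sqrt π := Real.sqrt_pos.mpr Real.pi_pos
  have h2 : Tendsto (fun n : ℕ => Stirling.stirlingSeq (2*n)) atTop (𝓝 (Real.sqrt π)) :=
    Stirling.tendsto_stirlingSeq_sqrt_pi.comp
      (tendsto_atTop_mono (fun n => by simp only [id_eq]; omega) tendsto_id)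
  have h1 : Tendsto (fun n : ℕ => (Stirling.stirlingSeq n)^2) atTop (𝓝 ((Real.sqrt π)^2)) :=
    Stirling.tendsto_stirlingSeq_sqrt_pi.pow 2
  have h3 := h2.div h1 (by positivity)
  have heq : (Real.sqrt π) / (Real.sqrt π)^2 = (Real.sqrt π)⁻¹ := by
    rw [sq]; field_simp
  rw [heq] at h3
  apply h3.congr'
  filter_upwards [eventually_ge_atTop 1] with n hn
  exact (A_eq_stirling hn).symm

lemma tendsto_R (k : ℕ) :
    Tendsto (fun n : ℕ => (Nat.descFactorial n k : ℝ) / (n:ℝ)^k) atTop (𝓝 1) := by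
  have h : Tendsto (fun n : ℕ => ∏ i ∈ range k, ((1:ℝ) - i / n)) atTop
      (𝓝 (∏ _i ∈ range k, (1:ℝ))) := by
    apply tendsto_finset_prod
    intro i _
    simpa using (tendsto_const_nhds.sub (tendsto_const_div_atTop_nhds_zero_nat (i:ℝ)))
  rw [Finset.prod_const_one] at h
  apply h.congr'
  filter_upwards [eventually_ge_atTop (max k 1)] with n hn
  have hk : k ≤ n := le_trans (le_max_left _ _) hn
  have hn1 : 1 ≤ n := le_trans (le_max_right _ _) hn
  have hn0 : (0:ℝ) < n := by exact_mod_cast hn1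
  rw [Nat.descFactorial_eq_prod_range, Nat.cast_prod,
    show ((n:ℝ))^k = ∏ _i ∈ range k, (n:ℝ) by rw [Finset.prod_const, Finset.card_range],
    ← Finset.prod_div_distrib]
  apply Finset.prod_congr rfl
  intro i hi
  have hik : i ≤ n := le_trans (le_of_lt (Finset.mem_range.mp hi)) hk
  rw [Nat.cast_sub hik]
  field_simp

noncomputable def F (x : ℝ) (n k : ℕ) : ℝ :=
  if k ≤ n then
    A n * ((Nat.descFactorial n k : ℝ) / (n:ℝ)^k)
      * ((-1)^k * x^(2*k) / (Nat.factorial (2*k))) else 0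

lemma summable_bound (x : ℝ) :
    Summable (fun k : ℕ => |x|^(2*k)/(Nat.factorial (2*k) : ℝ)) := by
  have hinj : Function.Injective (fun k : ℕ => 2*k) := mul_right_injective₀ two_ne_zero
  have := (Real.summable_pow_div_factorial |x|).comp_injective hinj
  exact this

lemma F_bound (x : ℝ) (n k : ℕ) :
    ‖F x n k‖ ≤ |x|^(2*k)/(Nat.factorial (2*k) : ℝ) := by
  have hfk : (0:ℝ) < (Nat.factorial (2*k) : ℝ) := by exact_mod_cast Nat.factorial_pos (2*k)
  unfold F
  split
  · rw [Real.norm_eq_abs, abs_mul, abs_mul]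
    have h1 : |A n| ≤ 1 := by rw [abs_of_nonneg (A_nonneg n)]; exact A_le_one n
    have h2 : |(Nat.descFactorial n k : ℝ) / (n:ℝ)^k| ≤ 1 := by
      rw [abs_of_nonneg (by positivity)]
      apply div_le_one_of_le₀
      · exact_mod_cast Nat.descFactorial_le_pow n k
      · positivity
    have h3 : |(-1:ℝ)^k * x^(2*k) / (Nat.factorial (2*k))| = |x|^(2*k)/(Nat.factorial (2*k)) := by
      rw [abs_div, abs_mul, abs_pow, abs_pow, abs_neg, abs_one, one_pow, one_mul,
        abs_of_nonneg hfk.le]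
    rw [h3]
    calc |A n| * |(Nat.descFactorial n k : ℝ) / (n:ℝ)^k| * (|x|^(2*k)/(Nat.factorial (2*k)))
        ≤ 1 * 1 * (|x|^(2*k)/(Nat.factorial (2*k))) := by
          apply mul_le_mul_of_nonneg_right (mul_le_mul h1 h2 (abs_nonneg _) (by norm_num))
            (by positivity)
      _ = |x|^(2*k)/(Nat.factorial (2*k)) := by ring
  · simp only [norm_zero]
    positivity

lemma tendsto_F (x : ℝ) (k : ℕ) :
    Tendsto (fun n => F x n k) atTop
      (𝓝 ((Real.sqrt π)⁻¹ * ((-1)^k * x^(2*k)/(Nat.factorial (2*k))))) := by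
  have h := (tendsto_A.mul (tendsto_R k)).mul_const
    ((-1:ℝ)^k * x^(2*k)/(Nat.factorial (2*k)))
  rw [mul_one] at h
  apply h.congr'
  filter_upwards [eventually_ge_atTop k] with n hn
  unfold F
  rw [if_pos hn]

lemma key (x : ℝ) (n : ℕ) :
    (-1 : ℝ) ^ n * Real.sqrt n * ((Nat.factorial (2 * n)) *
        ∑ k ∈ Finset.range (n + 1),
          (-1 : ℝ) ^ (n - k) * (2 * (x / (2 * Real.sqrt n))) ^ (2 * k) /
            ((Nat.factorial (2 * k)) * (Nat.factorial (n - k)))) /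
      (2 ^ (2 * n) * (Nat.factorial n)) = ∑' k, F x n k := by
  rw [tsum_eq_sum (s := Finset.range (n+1))
    (fun k hk => by unfold F; rw [if_neg]; intro h; exact hk (Finset.mem_range.mpr (by omega)))]
  rcases Nat.eq_zero_or_pos n with rfl | hn
  · simp [F, A]
  · have hn0 : (0:ℝ) < n := by exact_mod_cast hn
    have hs0 : 0 < Real.sqrt n := Real.sqrt_pos.mpr hn0
    have hs : Real.sqrt n ^ 2 = (n:ℝ) := Real.sq_sqrt hn0.le
    rw [Finset.mul_sum, Finset.mul_sum, Finset.sum_div]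
    apply Finset.sum_congr rfl
    intro k hk
    have hkn : k ≤ n := Nat.lt_succ_iff.mp (Finset.mem_range.mp hk)
    have hsgn : ((-1:ℝ))^n * (-1)^(n-k) = (-1)^k := by
      rw [← pow_add, show n + (n-k) = 2*(n-k)+k by omega, pow_add, pow_mul]
      norm_num
    have hfnk : (0:ℝ) < (Nat.factorial (n-k) : ℝ) := by exact_mod_cast Nat.factorial_pos (n-k)
    have hdesc : (Nat.descFactorial n k : ℝ) =
        (Nat.factorial n : ℝ) / (Nat.factorial (n-k) : ℝ) := by
      rw [eq_div_iff hfnk.ne', mul_comm]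
      exact_mod_cast Nat.factorial_mul_descFactorial hkn
    have h2y : 2 * (x / (2 * Real.sqrt n)) = x / Real.sqrt n := by
      field_simp
    have hspow : Real.sqrt n ^ (2*k) = (n:ℝ)^k := by rw [pow_mul, hs]
    unfold F
    rw [if_pos hkn, h2y, div_pow, hspow, hdesc]
    have hfn : (0:ℝ) < (Nat.factorial n : ℝ) := by exact_mod_cast Nat.factorial_pos n
    have hf2k : (0:ℝ) < (Nat.factorial (2*k) : ℝ) := by exact_mod_cast Nat.factorial_pos (2*k)
    have hf2n : (0:ℝ) < (Nat.factorial (2*n) : ℝ) := by exact_mod_cast Nat.factorial_pos (2*n)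
    have hnk : (0:ℝ) < (n:ℝ)^k := by positivity
    unfold A
    field_simp
    linear_combination x ^ (k*2) * hsgn

end Stmt19

theorem stmt_19 (x : ℝ) :
    let H : ℕ → ℝ → ℝ := fun n y =>
      (Nat.factorial (2 * n)) * ∑ k ∈ Finset.range (n + 1),
        (-1 : ℝ) ^ (n - k) * (2 * y) ^ (2 * k) /
          ((Nat.factorial (2 * k)) * (Nat.factorial (n - k)))
    Tendsto (fun n : ℕ =>
        (-1 : ℝ) ^ n * Real.sqrt n * H n (x / (2 * Real.sqrt n)) /
          (2 ^ (2 * n) * (Nat.factorial n)))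
      atTop (nhds (Real.cos x / Real.sqrt Real.pi)) := by
  intro H
  have hπ : 0 < Real.sqrt Real.pi := Real.sqrt_pos.mpr Real.pi_pos
  have hmain := tendsto_tsum_of_dominated_convergence (Stmt19.summable_bound x)
    (Stmt19.tendsto_F x) (Eventually.of_forall fun n k => Stmt19.F_bound x n k)
  have hsum : ∑' k : ℕ, ((Real.sqrt Real.pi)⁻¹ *
      ((-1:ℝ)^k * x^(2*k)/(Nat.factorial (2*k) : ℝ))) = Real.cos x / Real.sqrt Real.pi := by
    rw [tsum_mul_left, ← Real.cos_eq_tsum, inv_mul_eq_div]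
  rw [hsum] at hmain
  exact hmain.congr fun n => (Stmt19.key x n).symm
end
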